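/- Let f : ℝⁿ → ℝⁿ be a smooth conformal map, i.e., at every point s the Jacobian factors as J_f(s) = λ(s)·O(s) where λ(s) ∈ ℝ is a nonzero scalar and O(s) is an orthogonal matrix. Then for every probability measure μ on ℝⁿ one has C_IMA(f, μ) = 0. -/
import Mathlib


open MeasureTheory
open scoped BigOperators ENNReal

/-- The Euclidean norm of the `i`-th column of a square real matrix. -/
noncomputable def columnNorm {n : ℕ} (W : Matrix (Fin n) (Fin n) ℝ) (i : Fin n) : ℝ :=
  Real.sqrt (∑ j, (W j i) ^ 2)

/-- The local IMA contrast of a square real matrix `W` with columns `w₁, …, w_n`: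
`c(W) = ∑ i, log ‖wᵢ‖ − log |det W|`. -/
noncomputable def localIMAContrast {n : ℕ} (W : Matrix (Fin n) (Fin n) ℝ) : ℝ :=
  (∑ i, Real.log (columnNorm W i)) - Real.log |W.det|

/-- The Jacobian matrix of `f : ℝⁿ → ℝⁿ` at `s`: `(J_f(s))_{ij} = ∂f_i/∂s_j (s)`. -/
noncomputable def jacobian {n : ℕ} (f : (Fin n → ℝ) → (Fin n → ℝ)) (s : Fin n → ℝ) :
    Matrix (Fin n) (Fin n) ℝ :=
  Matrix.of fun i j => fderiv ℝ f s (Pi.single j 1) i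

/-- The global IMA contrast `C_IMA(f, μ) = ∫ c(J_f(s)) dμ(s)`, as a Lebesgue integral
in `[0, ∞]` of the (nonnegative) local IMA contrast of the Jacobian. -/
noncomputable def globalIMAContrast {n : ℕ} (f : (Fin n → ℝ) → (Fin n → ℝ))
    (μ : Measure (Fin n → ℝ)) : ℝ≥0∞ :=
  ∫⁻ s, ENNReal.ofReal (localIMAContrast (jacobian f s)) ∂μ

open Matrix in
lemma localIMAContrast_smul_orth {n : ℕ} (l : ℝ) (O : Matrix (Fin n) (Fin n) ℝ)
    (hl : l ≠ 0) (hO : Oᵀ * O = 1) : localIMAContrast (l • O) = 0 := by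
  have hcolsq : ∀ i : Fin n, ∑ j, (O j i) ^ 2 = 1 := by
    intro i
    have := congrFun (congrFun hO i) i
    simpa [Matrix.mul_apply, Matrix.transpose_apply, Matrix.one_apply, sq] using this
  have hcol : ∀ i : Fin n, columnNorm (l • O) i = |l| := by
    intro i
    have : ∑ j, ((l • O) j i) ^ 2 = l ^ 2 := by
      simp only [Matrix.smul_apply, smul_eq_mul, mul_pow]
      rw [← Finset.mul_sum, hcolsq i, mul_one]
    rw [columnNorm, this, Real.sqrt_sq_eq_abs]
  have hdetO : |O.det| = 1 := by
    have h2 : O.det ^ 2 = 1 := by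
      have := congrArg Matrix.det hO
      simpa [Matrix.det_mul, Matrix.det_transpose, sq, mul_comm] using this
    have h3 : |O.det| ^ 2 = 1 := by rw [sq_abs]; exact h2
    nlinarith [abs_nonneg O.det]
  have hdet : |(l • O).det| = |l| ^ n := by
    rw [Matrix.det_smul, abs_mul, abs_pow, hdetO, mul_one, Fintype.card_fin]
  rw [localIMAContrast]
  simp only [hcol, hdet, Finset.sum_const, Finset.card_univ, Fintype.card_fin, nsmul_eq_mul,
    Real.log_pow]
  ring

open Matrix in
theorem globalIMAContrast_eq_zero_of_conformal
    {n : ℕ} (f : (Fin n → ℝ) → (Fin n → ℝ))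
    (hf : ContDiff ℝ 1 f)
    (hconf : ∀ s : Fin n → ℝ, ∃ (l : ℝ) (O : Matrix (Fin n) (Fin n) ℝ),
      l ≠ 0 ∧ Oᵀ * O = 1 ∧ jacobian f s = l • O)
    (μ : Measure (Fin n → ℝ)) [IsProbabilityMeasure μ] :
    globalIMAContrast f μ = 0 := by
  rw [globalIMAContrast]
  have h : ∀ s, ENNReal.ofReal (localIMAContrast (jacobian f s)) = 0 := by
    intro s
    obtain ⟨l, O, hl, hO, hJ⟩ := hconf s
    rw [hJ, localIMAContrast_smul_orth l O hl hO]
    simp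
  simp [h]
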